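/- Let Γ be a finite simple graph with N ≥ 1 vertices, let w be a nonnegative real-valued weight function on the edges of Γ, and let I ≥ 0 be a real number such that every cycle of Γ has total edge weight at least I (summing w over the distinct edges of the cycle). Then every reduced walk in Γ — a walk in which no edge is immediately followed by the same edge traversed in reverse — consisting of at least N edges contains an edge e with w(e) ≥ I/N. -/

import Mathlib

private lemma exists_max_wt {α : Type*} (w : α → ℝ) :
    ∀ l : List α, l ≠ [] → ∃ e ∈ l, ∀ x ∈ l, w x ≤ w e := by
  intro l hl
  induction l with
  | nil => simp at hl
  | cons a l ih =>
    rcases eq_or_ne l [] with rfl | hne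
    · exact ⟨a, by simp, by simp⟩
    · obtain ⟨e, he, hmax⟩ := ih hne
      rcases le_total (w a) (w e) with h | h
      · refine ⟨e, List.mem_cons_of_mem _ he, ?_⟩
        intro x hx
        rcases List.mem_cons.mp hx with rfl | hx
        · exact h
        · exact hmax x hx
      · refine ⟨a, List.mem_cons_self, ?_⟩
        intro x hx
        rcases List.mem_cons.mp hx with rfl | hx
        · exact le_refl _
        · exact (hmax x hx).trans h

private lemma extract_cycle {V : Type*} (G : SimpleGraph V) :
    ∀ (u v : V) (p : G.Walk u v),
      p.darts.Chain' (fun d d' => d' ≠ d.symm) → ¬ p.support.Nodup →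
      ∃ (x : V) (c : G.Walk x x), c.IsCycle ∧ ∀ e ∈ c.edges, e ∈ p.edges := by
  classical
  intro u v p
  induction p with
  | nil => intro _ h; simp at h
  | @cons u b v h q ih =>
    intro hred hns
    rw [SimpleGraph.Walk.darts_cons] at hred
    by_cases hq : q.support.Nodup
    · have hu : u ∈ q.support := by
        rw [SimpleGraph.Walk.support_cons, List.nodup_cons] at hns
        tauto
      set t := q.takeUntil u hu with ht
      have hqpath : q.IsPath := SimpleGraph.Walk.IsPath.mk' hq
      have htpath : t.IsPath := hqpath.takeUntil hu
      have htpre : t.darts <+: q.darts := ⟨(q.dropUntil u hu).darts, by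
        rw [← SimpleGraph.Walk.darts_append, SimpleGraph.Walk.take_spec]⟩
      have hcred : (SimpleGraph.Walk.cons h t).darts.Chain'
          (fun d d' => d' ≠ d.symm) := by
        rw [SimpleGraph.Walk.darts_cons]
        exact hred.prefix (List.cons_prefix_cons.mpr ⟨rfl, htpre⟩)
      have hne : s(u, b) ∉ t.edges := by
        intro hmem
        cases ht' : t with
        | nil => rw [ht'] at hmem; simp at hmem
        | @cons b c u h' t' =>
          rw [ht'] at hmem htpath hcred
          rw [SimpleGraph.Walk.edges_cons, List.mem_cons] at hmem
          rcases hmem with hmem | hmem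
          · have hcu : c = u := by
              rw [Sym2.eq_iff] at hmem
              rcases hmem with ⟨h1, h2⟩ | ⟨h1, h2⟩
              · exact absurd h1 h.ne
              · exact h1.symm
            subst hcu
            have ht'nil : t' = SimpleGraph.Walk.nil := by
              rw [← SimpleGraph.Walk.isPath_iff_eq_nil]
              exact htpath.of_cons
            subst ht'nil
            simp only [SimpleGraph.Walk.darts_cons, SimpleGraph.Walk.darts_nil, List.Chain',
              List.isChain_cons_cons, List.isChain_singleton, and_true] at hcred
            exact hcred (by ext <;> rfl)
          · have hb : b ∈ t'.support :=
              SimpleGraph.Walk.snd_mem_support_of_mem_edges t' hmem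
            have hnd := htpath.support_nodup
            rw [SimpleGraph.Walk.support_cons, List.nodup_cons] at hnd
            exact hnd.1 hb
      refine ⟨u, SimpleGraph.Walk.cons h t, ?_, ?_⟩
      · exact (SimpleGraph.Walk.cons_isCycle_iff t h).mpr ⟨htpath, hne⟩
      · intro e he
        rw [SimpleGraph.Walk.edges_cons, List.mem_cons] at he ⊢
        rcases he with he | he
        · exact Or.inl he
        · exact Or.inr (SimpleGraph.Walk.edges_takeUntil_subset q hu he)
    · obtain ⟨x, c, hc, hsub⟩ := ih hred.tail hq
      exact ⟨x, c, hc, fun e he => by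
        rw [SimpleGraph.Walk.edges_cons]
        exact List.mem_cons_of_mem _ (hsub e he)⟩

/-- Combinatorial core of Lemma 2.8: if every cycle of a finite simple graph on
`N ≥ 1` vertices has total edge weight at least `I ≥ 0`, then every reduced walk
(no edge immediately followed by the same edge reversed) with at least `N` edges
contains an edge of weight at least `I / N`. -/
theorem stmt_5 {V : Type*} [Fintype V] (G : SimpleGraph V)
    (hN : 1 ≤ Fintype.card V)
    (w : Sym2 V → ℝ) (hw : ∀ e ∈ G.edgeSet, 0 ≤ w e)
    (I : ℝ) (hI : 0 ≤ I)
    (hcyc : ∀ (v : V) (c : G.Walk v v), c.IsCycle → I ≤ (c.edges.map w).sum)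
    (u v : V) (p : G.Walk u v)
    (hred : p.darts.Chain' (fun d d' => d' ≠ d.symm))
    (hlen : Fintype.card V ≤ p.length) :
    ∃ e ∈ p.edges, I / (Fintype.card V : ℝ) ≤ w e := by
  set N := Fintype.card V with hNdef
  have hns : ¬ p.support.Nodup := by
    intro hnd
    have := hnd.length_le_card
    rw [SimpleGraph.Walk.length_support] at this
    omega
  obtain ⟨x, c, hc, hsub⟩ := extract_cycle G u v p hred hns
  have hcne : c.edges ≠ [] := by
    intro h0
    have := hc.ne_nil
    cases c with
    | nil => exact this rfl
    | cons h q => simp [SimpleGraph.Walk.edges_cons] at h0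
  obtain ⟨e, he, hmax⟩ := exists_max_wt w c.edges hcne
  have hsum : I ≤ (c.edges.map w).sum := hcyc x c hc
  have hlen_le : c.edges.length ≤ N := by
    have h1 : c.edges.length = c.length := SimpleGraph.Walk.length_edges c
    have h2 : c.support.tail.Nodup := hc.2
    have h3 : c.support.tail.length ≤ N := h2.length_le_card
    have h4 : c.support.length = c.length + 1 := SimpleGraph.Walk.length_support c
    have h5 : c.support.tail.length = c.support.length - 1 := List.length_tail
    omega
  have hwe : 0 ≤ w e :=
    hw e (SimpleGraph.Walk.edges_subset_edgeSet c he)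
  have hsum_le : (c.edges.map w).sum ≤ (c.edges.length : ℝ) * w e := by
    have := List.sum_le_card_nsmul (c.edges.map w) (w e) (by
      intro x hx
      obtain ⟨a, ha, rfl⟩ := List.mem_map.mp hx
      exact hmax a ha)
    rwa [List.length_map, nsmul_eq_mul] at this
  refine ⟨e, hsub e he, ?_⟩
  rw [div_le_iff₀ (by exact_mod_cast hN : (0:ℝ) < N)]
  calc I ≤ (c.edges.map w).sum := hsum
    _ ≤ (c.edges.length : ℝ) * w e := hsum_le
    _ ≤ (N : ℝ) * w e := by
        apply mul_le_mul_of_nonneg_right _ hwe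
        exact_mod_cast hlen_le
    _ = w e * N := mul_comm _ _
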